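/- Let G : 𝕋 → ℝ be a C² function which is β-Morse for some β > 0. Then the set of critical points of G in one period is finite, and its cardinality is at most π·√(2·sup_𝕋|G''|/β). -/

import Mathlib

open scoped Real

/-- `F : 𝕋 → ℝ` (modeled as a `2π`-periodic function on `ℝ`) is `β`-Morse:
`min_θ (|F'(θ)| + |F''(θ)|) ≥ β` and any two critical points which are distinct modulo `2π`
have critical values at distance at least `β`. -/
def BetaMorse (β : ℝ) (F : ℝ → ℝ) : Prop :=
  (∀ θ, β ≤ |deriv F θ| + |deriv (deriv F) θ|) ∧
  (∀ θ₁ θ₂, deriv F θ₁ = 0 → deriv F θ₂ = 0 → (¬ ∃ m : ℤ, θ₁ = θ₂ + 2 * π * m) →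
    β ≤ |F θ₁ - F θ₂|)

lemma taylor_bound' (G : ℝ → ℝ) (M : ℝ) (hd : Differentiable ℝ G)
    (hd' : Differentiable ℝ (deriv G))
    (hM : ∀ θ, |deriv (deriv G) θ| ≤ M) {a b : ℝ} (hab : a ≤ b)
    (ha : deriv G a = 0) : |G b - G a| ≤ M * (b - a)^2 / 2 := by
  have hM0 : 0 ≤ M := le_trans (abs_nonneg _) (hM a)
  have hlip : ∀ t, |deriv G t| ≤ M * |t - a| := by
    intro t
    have := Convex.norm_image_sub_le_of_norm_deriv_le (f := deriv G) (s := Set.univ)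
      (fun x _ => hd' x) (fun x _ => hM x) convex_univ (Set.mem_univ a) (Set.mem_univ t)
    simpa [ha, Real.norm_eq_abs] using this
  have hq : ∀ x : ℝ, HasDerivAt (fun t : ℝ => M * (t - a)^2 / 2) (M * (x - a)) x := by
    intro x
    have h0 : HasDerivAt (fun t : ℝ => (t - a)^2) (2*(x-a)) x := by
      simpa using ((hasDerivAt_id x).sub_const a).fun_pow 2
    have := (h0.const_mul M).div_const 2
    rw [show M * (x - a) = M * (2 * (x - a)) / 2 by ring]; exact this
  have key : ∀ s : ℝ, (s = 1 ∨ s = -1) →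
      s * (G b - G a) ≤ M * (b - a)^2 / 2 := by
    intro s hs
    set u : ℝ → ℝ := fun t => M * (t - a)^2 / 2 - s * (G t - G a) with hu
    have hud : ∀ x : ℝ, HasDerivAt u (M * (x - a) - s * deriv G x) x := by
      intro x
      exact (hq x).sub ((((hd x).hasDerivAt).sub_const (G a)).const_mul s)
    have hudiff : Differentiable ℝ u := fun x => (hud x).differentiableAt
    have mono : MonotoneOn u (Set.Icc a b) := by
      apply monotoneOn_of_deriv_nonneg (convex_Icc a b) hudiff.continuous.continuousOn
        hudiff.differentiableOn
      intro x hx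
      rw [interior_Icc] at hx
      rw [(hud x).deriv]
      have h1 := hlip x
      have h2 : |x - a| = x - a := abs_of_nonneg (by linarith [hx.1])
      rw [h2] at h1
      have h3 : s * deriv G x ≤ |deriv G x| := by
        rcases hs with h | h <;> rw [h] <;>
          simp [le_abs_self, neg_abs_le, neg_le, abs_le] <;> linarith [neg_abs_le (deriv G x)]
      linarith
    have := mono (Set.left_mem_Icc.mpr hab) (Set.right_mem_Icc.mpr hab) hab
    simp only [hu] at this
    simp at this
    nlinarith [this]
  have k1 := key 1 (Or.inl rfl)
  have k2 := key (-1) (Or.inr rfl)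
  rw [abs_le]; constructor <;> nlinarith

/-- If `G` is `C²`, `2π`-periodic and `β`-Morse, then the set of critical
points of `G` in one period is finite, with cardinality at most `π·√(2·sup|G''|/β)`. -/
theorem card_critical_points_le (G : ℝ → ℝ) (β : ℝ) (hβ : 0 < β)
    (hG : ContDiff ℝ 2 G) (hGper : ∀ θ, G (θ + 2 * π) = G θ)
    (hMorse : BetaMorse β G) :
    {θ ∈ Set.Ico (0 : ℝ) (2 * π) | deriv G θ = 0}.Finite ∧
      ({θ ∈ Set.Ico (0 : ℝ) (2 * π) | deriv G θ = 0}.ncard : ℝ)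
        ≤ π * Real.sqrt (2 * sSup (Set.range fun θ => |deriv (deriv G) θ|) / β) := by
  have hπ := Real.pi_pos
  have hdiff : Differentiable ℝ G := hG.differentiable (by norm_num)
  have h1 : ContDiff ℝ ((1:ℕ∞)+1) G := by norm_num at hG ⊢; exact hG
  have h2 := (contDiff_succ_iff_deriv.mp h1).2.2
  have h3 : ContDiff ℝ ((0:ℕ∞)+1) (deriv G) := by norm_num at h2 ⊢; exact h2
  have hd' : Differentiable ℝ (deriv G) := h3.differentiable (by norm_num)
  have hcont'' : Continuous (deriv (deriv G)) := (contDiff_succ_iff_deriv.mp h3).2.2.continuous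
  have hper' : ∀ x, deriv G (x + 2*π) = deriv G x := by
    intro x
    have he : (fun y => G (y + 2*π)) = G := funext hGper
    rw [← deriv_comp_add_const, he]
  have hper'' : ∀ x, deriv (deriv G) (x + 2*π) = deriv (deriv G) x := by
    intro x
    have he : (fun y => deriv G (y + 2*π)) = deriv G := funext hper'
    rw [← deriv_comp_add_const, he]
  set M := sSup (Set.range fun θ => |deriv (deriv G) θ|) with hMdef
  have hbdd : BddAbove (Set.range fun θ => |deriv (deriv G) θ|) := by
    have habs : Continuous fun θ => |deriv (deriv G) θ| := hcont''.abs
    have himg := Function.Periodic.image_uIcc (f := fun θ => |deriv (deriv G) θ|)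
      (c := 2*π) (fun x => by simp [hper'' x]) (by positivity) 0
    rw [← himg]
    exact (isCompact_uIcc.image habs).bddAbove
  have hM : ∀ θ, |deriv (deriv G) θ| ≤ M := fun θ => le_csSup hbdd ⟨θ, rfl⟩
  set S := {θ ∈ Set.Ico (0 : ℝ) (2 * π) | deriv G θ = 0} with hSdef
  rcases S.eq_empty_or_nonempty with hS | hS
  · rw [hS]
    refine ⟨Set.finite_empty, ?_⟩
    simp only [Set.ncard_empty, Nat.cast_zero]
    positivity
  obtain ⟨θc, hθc⟩ := hS
  have hβM : β ≤ M := by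
    have h := hMorse.1 θc
    rw [hθc.2] at h
    simp only [abs_zero, zero_add] at h
    exact le_trans h (hM θc)
  have hM0 : 0 < M := lt_of_lt_of_le hβ hβM
  set δ := Real.sqrt (2*β/M) with hδdef
  have hδ0 : 0 < δ := Real.sqrt_pos.mpr (by positivity)
  have hδ2π : δ ≤ 2*π := by
    have h4 : 2*β/M ≤ 4 := by rw [div_le_iff₀ hM0]; nlinarith
    calc δ ≤ Real.sqrt 4 := Real.sqrt_le_sqrt h4
    _ = 2 := by rw [show (4:ℝ) = 2^2 by norm_num, Real.sqrt_sq (by norm_num)]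
    _ ≤ 2*π := by nlinarith [Real.pi_gt_three]
  have hncong : ∀ a b : ℝ, a ∈ Set.Ico (0:ℝ) (2*π) → b ∈ Set.Ico (0:ℝ) (2*π) → a ≠ b →
      ¬ ∃ m : ℤ, a = b + 2 * π * m := by
    intro a b ha hb hne
    rintro ⟨m, hm⟩
    rcases eq_or_ne m 0 with h | h
    · simp [h] at hm; exact hne hm
    · have h1 : (1:ℝ) ≤ |(m:ℝ)| := by exact_mod_cast Int.one_le_abs h
      have h2 : |a - b| < 2*π := by
        rw [abs_sub_lt_iff]; constructor
        · linarith [ha.2, hb.1]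
        · linarith [hb.2, ha.1]
      rw [hm] at h2
      have h5 : |b + 2*π*m - b| = 2*π*|(m:ℝ)| := by
        rw [show b + 2*π*(m:ℝ) - b = 2*π*(m:ℝ) by ring, abs_mul, abs_of_pos (by linarith)]
      rw [h5] at h2
      nlinarith
  have sep : ∀ a b : ℝ, deriv G a = 0 → deriv G b = 0 → a < b →
      (¬ ∃ m : ℤ, b = a + 2 * π * m) → δ ≤ b - a := by
    intro a b ha hb hab hne
    have hmorse := hMorse.2 b a hb ha hne
    have htay := taylor_bound' G M hdiff hd' hM hab.le ha
    have hsq : 2*β/M ≤ (b-a)^2 := by rw [div_le_iff₀ hM0]; nlinarith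
    calc δ ≤ Real.sqrt ((b-a)^2) := Real.sqrt_le_sqrt hsq
    _ = b - a := by rw [Real.sqrt_sq (by linarith)]
  have sepS : ∀ a ∈ S, ∀ b ∈ S, a ≠ b → δ ≤ |b - a| := by
    intro a ha b hb hne
    rcases lt_or_gt_of_ne hne with h | h
    · rw [abs_of_pos (by linarith)]
      exact sep a b ha.2 hb.2 h (hncong b a hb.1 ha.1 (Ne.symm hne))
    · rw [abs_of_neg (by linarith)]
      have := sep b a hb.2 ha.2 h (hncong a b ha.1 hb.1 hne)
      linarith
  have hbin : ∀ θ₀ : ℝ, Set.InjOn (fun θ => ⌊(θ - θ₀)/δ⌋) S := by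
    intro θ₀ a ha b hb hfab
    by_contra hne
    have hsep := sepS a ha b hb hne
    simp only at hfab
    have h1 : (a - θ₀)/δ < ⌊(a - θ₀)/δ⌋ + 1 := Int.lt_floor_add_one _
    have h2 : (⌊(a - θ₀)/δ⌋ : ℝ) ≤ (a - θ₀)/δ := Int.floor_le _
    have h3 : (b - θ₀)/δ < ⌊(b - θ₀)/δ⌋ + 1 := Int.lt_floor_add_one _
    have h4 : (⌊(b - θ₀)/δ⌋ : ℝ) ≤ (b - θ₀)/δ := Int.floor_le _
    rw [hfab] at h1 h2
    have h5 : |(b - a)/δ| < 1 := by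
      rw [abs_lt]
      constructor
      · have h6 : (b - θ₀)/δ - (a - θ₀)/δ > -1 := by linarith
        rw [div_sub_div_same] at h6
        have : b - θ₀ - (a - θ₀) = b - a := by ring
        rw [this] at h6; linarith
      · have h6 : (b - θ₀)/δ - (a - θ₀)/δ < 1 := by linarith
        rw [div_sub_div_same] at h6
        have : b - θ₀ - (a - θ₀) = b - a := by ring
        rw [this] at h6; linarith
    rw [abs_div, abs_of_pos hδ0, div_lt_one hδ0] at h5
    linarith
  have hfin : S.Finite := by
    apply Set.Finite.of_finite_image _ (hbin 0)
    apply Set.Finite.subset (Set.finite_Icc (0:ℤ) ⌊2*π/δ⌋)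
    rintro k ⟨θ, hθ, rfl⟩
    simp only [sub_zero]
    rw [Set.mem_Icc]
    refine ⟨Int.floor_nonneg.mpr (div_nonneg hθ.1.1 hδ0.le), ?_⟩
    exact Int.floor_le_floor (by gcongr; exact hθ.1.2.le)
  refine ⟨hfin, ?_⟩
  -- minimum of S
  have hTne : hfin.toFinset.Nonempty := by
    rw [Set.Finite.toFinset_nonempty]; exact ⟨θc, hθc⟩
  set θ₀ := hfin.toFinset.min' hTne with hθ₀def
  have hθ₀S : θ₀ ∈ S := hfin.mem_toFinset.mp (hfin.toFinset.min'_mem hTne)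
  have hθ₀min : ∀ θ ∈ S, θ₀ ≤ θ := fun θ hθ =>
    hfin.toFinset.min'_le θ (hfin.mem_toFinset.mpr hθ)
  -- wraparound bound
  have wrap : ∀ θ ∈ S, θ ≤ θ₀ + 2*π - δ := by
    intro θ hθ
    rcases eq_or_ne θ θ₀ with h | h
    · rw [h]; linarith
    · have hlt : θ₀ < θ := lt_of_le_of_ne (hθ₀min θ hθ) (Ne.symm h)
      have hd0 : deriv G (θ₀ + 2*π) = 0 := by rw [hper']; exact hθ₀S.2
      have hlt2 : θ < θ₀ + 2*π := by linarith [hθ.1.2, hθ₀S.1.1]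
      have hnc : ¬ ∃ m : ℤ, θ₀ + 2*π = θ + 2*π*m := by
        rintro ⟨m, hm⟩
        have hk : (2*π) * ((1 - m : ℤ):ℝ) = θ - θ₀ := by push_cast; nlinarith
        have hkpos : (0:ℝ) < ((1-m:ℤ):ℝ) := by nlinarith
        have hk1 : (1:ℤ) ≤ 1 - m := by exact_mod_cast hkpos
        have hk1' : (1:ℝ) ≤ ((1-m:ℤ):ℝ) := by exact_mod_cast hk1
        nlinarith [hθ.1.2, hθ₀S.1.1]
      have := sep θ (θ₀ + 2*π) hθ.2 hd0 hlt2 hnc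
      linarith
  -- cardinality bound via binning
  set K := ⌊(2*π - δ)/δ⌋ with hKdef
  have hK0 : (0:ℤ) ≤ K := Int.floor_nonneg.mpr (div_nonneg (by linarith) hδ0.le)
  have himg2 : (fun θ => ⌊(θ - θ₀)/δ⌋) '' S ⊆ Set.Icc 0 K := by
    rintro k ⟨θ, hθ, rfl⟩
    rw [Set.mem_Icc]
    refine ⟨Int.floor_nonneg.mpr (div_nonneg (by linarith [hθ₀min θ hθ]) hδ0.le), ?_⟩
    apply Int.floor_le_floor
    apply div_le_div_of_nonneg_right ?_ hδ0.le
    linarith [wrap θ hθ]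
  have hcard : S.ncard ≤ (K+1).toNat := by
    rw [← Set.ncard_image_of_injOn (hbin θ₀)]
    calc ((fun θ => ⌊(θ - θ₀)/δ⌋) '' S).ncard ≤ (Set.Icc (0:ℤ) K).ncard :=
          Set.ncard_le_ncard himg2 (Set.finite_Icc _ _)
    _ = (K+1).toNat := by
          rw [← Finset.coe_Icc, Set.ncard_coe_finset, Int.card_Icc]
          simp
  have hcardR : (S.ncard : ℝ) ≤ 2*π/δ := by
    have h1 : (S.ncard : ℝ) ≤ ((K+1).toNat : ℝ) := by exact_mod_cast hcard
    have h2 : (((K+1).toNat : ℤ) : ℝ) = ((K:ℝ) + 1) := by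
      rw [Int.toNat_of_nonneg (by linarith)]; push_cast; ring
    have h3 : (K:ℝ) ≤ (2*π - δ)/δ := Int.floor_le _
    have h4 : ((K+1).toNat : ℝ) = (K:ℝ) + 1 := by exact_mod_cast h2
    rw [h4] at h1
    have h5 : (2*π - δ)/δ + 1 = 2*π/δ := by field_simp; ring
    linarith
  -- convert 2π/δ to the stated bound
  have hssq : Real.sqrt (2*M/β) = 2/δ := by
    have key : δ * Real.sqrt (2*M/β) = 2 := by
      rw [hδdef, ← Real.sqrt_mul (by positivity)]
      rw [show 2*β/M * (2*M/β) = 4 by field_simp; ring]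
      rw [show (4:ℝ) = 2^2 by norm_num, Real.sqrt_sq (by norm_num)]
    rw [eq_div_iff hδ0.ne']
    linarith [key]
  rw [hssq]
  calc (S.ncard : ℝ) ≤ 2*π/δ := hcardR
  _ = π * (2/δ) := by ring
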